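/- arXiv:1706.06545 — 3 statements merged into one kernel-verified Lean document; each statement's English description precedes it below -/
import Mathlib

section
/- Let Q be a stably Gelfand quantale and b ∈ Q a projection. Then I_b(Q) is closed under multiplication: if s, t ∈ I_b(Q) then st ∈ I_b(Q); moreover b ∈ I_b(Q), so I_b(Q) is a monoid with unit b. -/
/-- An involutive quantale: a complete lattice with an associative multiplication
distributing over arbitrary joins in each variable, and a join-preserving
involution that is an anti-automorphism of period 2. -/
class InvQuantale (Q : Type*) extends CompleteLattice Q, Semigroup Q, StarMul Q where
  mul_sSup : ∀ (a : Q) (S : Set Q), a * sSup S = ⨆ s ∈ S, a * s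
  sSup_mul : ∀ (S : Set Q) (a : Q), sSup S * a = ⨆ s ∈ S, s * a
  star_sSup : ∀ (S : Set Q), star (sSup S) = ⨆ s ∈ S, star s

/-- The set `I_b(Q)` of partial units relative to `b`. -/
def Ib {Q : Type*} [InvQuantale Q] (b : Q) : Set Q :=
  {a | star a * a ≤ b ∧ a * star a ≤ b ∧ a * b ≤ a ∧ b * a ≤ a}

/-- `Q` is stably Gelfand if `a a* a ≤ a` implies `a a* a = a`. -/
def IsStablyGelfand (Q : Type*) [InvQuantale Q] : Prop :=
  ∀ a : Q, a * star a * a ≤ a → a * star a * a = a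

private lemma mul_le_mul_left'' {Q : Type*} [InvQuantale Q] {a b : Q} (h : a ≤ b) (c : Q) :
    c * a ≤ c * b := by
  have hs : c * b = c * sSup {a, b} := by rw [sSup_pair, sup_eq_right.2 h]
  rw [hs, InvQuantale.mul_sSup]
  exact le_iSup₂_of_le a (Set.mem_insert a {b}) le_rfl

private lemma mul_le_mul_right'' {Q : Type*} [InvQuantale Q] {a b : Q} (h : a ≤ b) (c : Q) :
    a * c ≤ b * c := by
  have hs : b * c = sSup {a, b} * c := by rw [sSup_pair, sup_eq_right.2 h]
  rw [hs, InvQuantale.sSup_mul]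
  exact le_iSup₂_of_le a (Set.mem_insert a {b}) le_rfl

theorem Ib_monoid {Q : Type*} [InvQuantale Q]
    (h : IsStablyGelfand Q) (b : Q) (hb : b * b = b) (hb' : star b = b) :
    (∀ s ∈ Ib b, ∀ t ∈ Ib b, s * t ∈ Ib b) ∧ b ∈ Ib b ∧
      (∀ s ∈ Ib b, s * b = s ∧ b * s = s) := by
  refine ⟨?_, ?_, ?_⟩
  · rintro s ⟨hs1, hs2, hs3, hs4⟩ t ⟨ht1, ht2, ht3, ht4⟩
    refine ⟨?_, ?_, ?_, ?_⟩
    · rw [star_mul]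
      calc star t * star s * (s * t) = star t * (star s * s) * t := by
            simp [mul_assoc]
        _ ≤ star t * b * t := mul_le_mul_right'' (mul_le_mul_left'' hs1 _) t
        _ = star t * (b * t) := by rw [mul_assoc]
        _ ≤ star t * t := mul_le_mul_left'' ht4 _
        _ ≤ b := ht1
    · rw [star_mul]
      calc s * t * (star t * star s) = s * (t * star t) * star s := by
            simp [mul_assoc]
        _ ≤ s * b * star s := mul_le_mul_right'' (mul_le_mul_left'' ht2 _) _
        _ ≤ s * star s := mul_le_mul_right'' hs3 _
        _ ≤ b := hs2
    · calc s * t * b = s * (t * b) := by rw [mul_assoc]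
        _ ≤ s * t := mul_le_mul_left'' ht3 _
    · calc b * (s * t) = b * s * t := by rw [mul_assoc]
        _ ≤ s * t := mul_le_mul_right'' hs4 _
  · exact ⟨by rw [hb', hb], by rw [hb', hb], hb.le, hb.le⟩
  · rintro s ⟨hs1, hs2, hs3, hs4⟩
    have key : s * star s * s = s := by
      apply h
      calc s * star s * s = s * (star s * s) := by rw [mul_assoc]
        _ ≤ s * b := mul_le_mul_left'' hs1 _
        _ ≤ s := hs3
    constructor
    · refine le_antisymm hs3 ?_
      calc s = s * star s * s := key.symm
        _ = s * (star s * s) := by rw [mul_assoc]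
        _ ≤ s * b := mul_le_mul_left'' hs1 _
    · refine le_antisymm hs4 ?_
      calc s = s * star s * s := key.symm
        _ ≤ b * s := mul_le_mul_right'' hs2 _
end

section
/- Let Q be a stably Gelfand quantale and b ∈ Q a projection. Then any two idempotents of I_b(Q) commute: if f, g ∈ I_b(Q) with f·f = f and g·g = g, then fg = gf. -/
section helpers
variable {Q : Type*} [InvQuantale Q]

lemma iq_mul_sup (a x y : Q) : a * (x ⊔ y) = a * x ⊔ a * y := by
  have := InvQuantale.mul_sSup a {x, y}
  rw [sSup_pair, iSup_pair] at this; exact this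

lemma iq_sup_mul (x y a : Q) : (x ⊔ y) * a = x * a ⊔ y * a := by
  have := InvQuantale.sSup_mul {x, y} a
  rw [sSup_pair, iSup_pair] at this; exact this

lemma iq_star_sup (x y : Q) : star (x ⊔ y) = star x ⊔ star y := by
  have := InvQuantale.star_sSup ({x, y} : Set Q)
  rw [sSup_pair, iSup_pair] at this; exact this

lemma iq_mul_le_mul_left {x y : Q} (a : Q) (h : x ≤ y) : a * x ≤ a * y := by
  have : a * y = a * x ⊔ a * y := by rw [← iq_mul_sup, sup_eq_right.mpr h]
  rw [this]; exact le_sup_left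

lemma iq_mul_le_mul_right {x y : Q} (h : x ≤ y) (a : Q) : x * a ≤ y * a := by
  have : y * a = x * a ⊔ y * a := by rw [← iq_sup_mul, sup_eq_right.mpr h]
  rw [this]; exact le_sup_left

lemma iq_star_le_star {x y : Q} (h : x ≤ y) : star x ≤ star y := by
  have : star y = star x ⊔ star y := by rw [← iq_star_sup, sup_eq_right.mpr h]
  rw [this]; exact le_sup_left

end helpers

section main
variable {Q : Type*} [InvQuantale Q]

/-- Every element of `I_b` satisfies `a a* a = a` in a stably Gelfand quantale. -/
lemma Ib_regular (h : IsStablyGelfand Q) {b : Q} (_hbb : b * b = b)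
    {a : Q} (ha : a ∈ Ib b) : a * star a * a = a := by
  obtain ⟨h1, h2, h3, h4⟩ := ha
  apply h
  calc a * star a * a = a * (star a * a) := by rw [mul_assoc]
    _ ≤ a * b := iq_mul_le_mul_left a h1
    _ ≤ a := h3

/-- Every idempotent of `I_b` is a projection. -/
lemma Ib_idem_star (h : IsStablyGelfand Q) {b : Q} (hbb : b * b = b) (hb' : star b = b)
    {f : Q} (hf : f ∈ Ib b) (hf2 : f * f = f) : star f = f := by
  obtain ⟨h1, h2, h3, h4⟩ := hf
  have hreg : f * star f * f = f := Ib_regular h hbb ⟨h1, h2, h3, h4⟩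
  have hsf2 : star f * star f = star f := by
    have := congrArg star hf2
    rwa [star_mul] at this
  -- f ≤ b
  have hfb : f ≤ b := by
    calc f = f * star f * f := hreg.symm
      _ = f * star f * (star f * f) := by
          rw [mul_assoc, mul_assoc, ← mul_assoc (star f), hsf2]
      _ ≤ b * (star f * f) := iq_mul_le_mul_right h2 _
      _ ≤ b * b := iq_mul_le_mul_left b h1
      _ = b := hbb
  -- b * star f ≤ star f and star f * b ≤ star f
  have hbsf : b * star f ≤ star f := by
    have := iq_star_le_star h3
    rwa [star_mul, hb'] at this
  have hsfb : star f * b ≤ star f := by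
    have := iq_star_le_star h4
    rwa [star_mul, hb'] at this
  -- f ≤ star f
  have hle : f ≤ star f := by
    calc f = f * star f * f := hreg.symm
      _ ≤ b * star f * f := iq_mul_le_mul_right (iq_mul_le_mul_right hfb _) f
      _ ≤ star f * f := iq_mul_le_mul_right hbsf f
      _ ≤ star f * b := iq_mul_le_mul_left _ hfb
      _ ≤ star f := hsfb
  have hle' : star f ≤ f := by
    have := iq_star_le_star hle
    rwa [star_star] at this
  exact le_antisymm hle' hle

end main

theorem Ib_idempotents_commute {Q : Type*} [InvQuantale Q]
    (h : IsStablyGelfand Q) (b : Q) (hb : b * b = b) (hb' : star b = b)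
    (f g : Q) (hf : f ∈ Ib b) (hg : g ∈ Ib b)
    (hf2 : f * f = f) (hg2 : g * g = g) :
    f * g = g * f := by
  have hfs : star f = f := Ib_idem_star h hb hb' hf hf2
  have hgs : star g = g := Ib_idem_star h hb hb' hg hg2
  obtain ⟨hf1, hf1', hf3, hf4⟩ := hf
  obtain ⟨hg1, hg1', hg3, hg4⟩ := hg
  have hfb : f ≤ b := by
    calc f = f * f := hf2.symm
      _ = star f * f := by rw [hfs]
      _ ≤ b := hf1
  have hgb : g ≤ b := by
    calc g = star g * g := by rw [hgs, hg2]
      _ ≤ b := hg1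
  -- f * g ∈ Ib b
  have hmem : f * g ∈ Ib b := by
    refine ⟨?_, ?_, ?_, ?_⟩
    · rw [star_mul, hfs, hgs]
      calc g * f * (f * g) = g * (f * f) * g := by rw [mul_assoc, mul_assoc, mul_assoc]
        _ = g * f * g := by rw [hf2]
        _ ≤ g * b * g := iq_mul_le_mul_right (iq_mul_le_mul_left g hfb) g
        _ ≤ g * g := iq_mul_le_mul_right hg3 g
        _ = g := hg2
        _ ≤ b := hgb
    · rw [star_mul, hfs, hgs]
      calc f * g * (g * f) = f * (g * g) * f := by rw [mul_assoc, mul_assoc, mul_assoc]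
        _ = f * g * f := by rw [hg2]
        _ ≤ f * b * f := iq_mul_le_mul_right (iq_mul_le_mul_left f hgb) f
        _ ≤ f * f := iq_mul_le_mul_right hf3 f
        _ = f := hf2
        _ ≤ b := hfb
    · calc f * g * b = f * (g * b) := by rw [mul_assoc]
        _ ≤ f * g := iq_mul_le_mul_left f hg3
    · calc b * (f * g) = b * f * g := by rw [mul_assoc]
        _ ≤ f * g := iq_mul_le_mul_right hf4 g
  have hreg : (f * g) * star (f * g) * (f * g) = f * g := Ib_regular h hb hmem
  have hidem : (f * g) * (f * g) = f * g := by
    calc (f * g) * (f * g) = f * (g * g) * (f * f) * g := by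
          rw [hg2, hf2]; simp only [mul_assoc]
      _ = (f * g) * (g * f) * (f * g) := by
          simp only [mul_assoc]
      _ = (f * g) * star (f * g) * (f * g) := by rw [star_mul, hfs, hgs]
      _ = f * g := hreg
  have : star (f * g) = f * g := Ib_idem_star h hb hb' hmem hidem
  rw [star_mul, hfs, hgs] at this
  exact this.symm
end

section
/- Let Q be a stably Gelfand quantale and b ∈ Q a projection. If S ⊆ I_b(Q) is a compatible subset (i.e., st* and s*t are idempotents of I_b(Q) for all s, t ∈ S), then the join ⋁S computed in Q belongs to I_b(Q). -/
section Aux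
variable {Q : Type*} [InvQuantale Q]

lemma IQ.mul_le_mul_left' {x y : Q} (a : Q) (hxy : x ≤ y) : a * x ≤ a * y := by
  have hy : sSup {x, y} = y := by rw [sSup_pair, sup_eq_right.mpr hxy]
  calc a * x ≤ ⨆ s ∈ ({x, y} : Set Q), a * s := le_iSup₂_of_le x (by simp) le_rfl
    _ = a * sSup {x, y} := (InvQuantale.mul_sSup a _).symm
    _ = a * y := by rw [hy]

lemma IQ.mul_le_mul_right' {x y : Q} (a : Q) (hxy : x ≤ y) : x * a ≤ y * a := by
  have hy : sSup {x, y} = y := by rw [sSup_pair, sup_eq_right.mpr hxy]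
  calc x * a ≤ ⨆ s ∈ ({x, y} : Set Q), s * a := le_iSup₂_of_le x (by simp) le_rfl
    _ = sSup {x, y} * a := (InvQuantale.sSup_mul _ a).symm
    _ = y * a := by rw [hy]

lemma IQ.mul_le_mul {x y w z : Q} (h1 : x ≤ y) (h2 : w ≤ z) : x * w ≤ y * z :=
  le_trans (IQ.mul_le_mul_left' x h2) (IQ.mul_le_mul_right' z h1)

lemma IQ.star_mono {x y : Q} (hxy : x ≤ y) : star x ≤ star y := by
  have hy : sSup {x, y} = y := by rw [sSup_pair, sup_eq_right.mpr hxy]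
  calc star x ≤ ⨆ s ∈ ({x, y} : Set Q), star s := le_iSup₂_of_le x (by simp) le_rfl
    _ = star (sSup {x, y}) := (InvQuantale.star_sSup _).symm
    _ = star y := by rw [hy]

/-- Any idempotent `e` with `e* e ≤ b`, `e e* ≤ b`, `e b ≤ e` whose star is also
idempotent satisfies `e ≤ b`. -/
lemma IQ.idem_le (h : IsStablyGelfand Q) {b e : Q} (hbb : b * b = b)
    (hes : star e * star e = star e)
    (h1 : star e * e ≤ b) (h2 : e * star e ≤ b) (h3 : e * b ≤ e) : e ≤ b := by
  have hle : e * star e * e ≤ e := by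
    calc e * star e * e = e * (star e * e) := mul_assoc _ _ _
      _ ≤ e * b := IQ.mul_le_mul_left' e h1
      _ ≤ e := h3
  have heq : e * star e * e = e := h e hle
  calc e = e * star e * e := heq.symm
    _ = e * (star e * star e) * e := by rw [hes]
    _ = (e * star e) * (star e * e) := by rw [mul_assoc, mul_assoc, mul_assoc]
    _ ≤ b * b := IQ.mul_le_mul h2 h1
    _ = b := hbb

end Aux

theorem Ib_closed_under_compatible_joins {Q : Type*} [InvQuantale Q]
    (h : IsStablyGelfand Q) (b : Q) (hb : b * b = b) (hb' : star b = b)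
    (S : Set Q) (hS : S ⊆ Ib b)
    (hcomp : ∀ s ∈ S, ∀ t ∈ S,
      (s * star t) * (s * star t) = s * star t ∧
      (star s * t) * (star s * t) = star s * t) :
    sSup S ∈ Ib b := by
  -- basic facts for members of S
  have hmem : ∀ s ∈ S, star s * s ≤ b ∧ s * star s ≤ b ∧ s * b ≤ s ∧ b * s ≤ s :=
    fun s hs => hS hs
  have hstb : ∀ s ∈ S, star s * b ≤ star s := by
    intro s hs
    have := (hmem s hs).2.2.2
    have := IQ.star_mono this
    rwa [star_mul, hb'] at this
  -- key: star s * t ≤ b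
  have key1 : ∀ s ∈ S, ∀ t ∈ S, star s * t ≤ b := by
    intro s hs t ht
    apply IQ.idem_le h hb (e := star s * t)
    · -- star (star s * t) idempotent
      have := (hcomp t ht s hs).2
      rw [star_mul, star_star]
      exact this
    · -- star e * e ≤ b
      rw [star_mul, star_star]
      calc star t * s * (star s * t) = star t * (s * star s) * t := by
            rw [mul_assoc, mul_assoc, mul_assoc]
        _ ≤ star t * b * t := IQ.mul_le_mul_right' t
              (IQ.mul_le_mul_left' (star t) (hmem s hs).2.1)
        _ ≤ star t * t := IQ.mul_le_mul_right' t (hstb t ht)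
        _ ≤ b := (hmem t ht).1
    · -- e * star e ≤ b
      rw [star_mul, star_star]
      calc star s * t * (star t * s) = star s * (t * star t) * s := by
            rw [mul_assoc, mul_assoc, mul_assoc]
        _ ≤ star s * b * s := IQ.mul_le_mul_right' s
              (IQ.mul_le_mul_left' (star s) (hmem t ht).2.1)
        _ ≤ star s * s := IQ.mul_le_mul_right' s (hstb s hs)
        _ ≤ b := (hmem s hs).1
    · -- e * b ≤ e
      calc star s * t * b = star s * (t * b) := mul_assoc _ _ _
        _ ≤ star s * t := IQ.mul_le_mul_left' _ (hmem t ht).2.2.1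
  -- key: s * star t ≤ b
  have key2 : ∀ s ∈ S, ∀ t ∈ S, s * star t ≤ b := by
    intro s hs t ht
    apply IQ.idem_le h hb (e := s * star t)
    · have := (hcomp t ht s hs).1
      rw [star_mul, star_star]
      exact this
    · rw [star_mul, star_star]
      calc t * star s * (s * star t) = t * (star s * s) * star t := by
            rw [mul_assoc, mul_assoc, mul_assoc]
        _ ≤ t * b * star t := IQ.mul_le_mul_right' _
              (IQ.mul_le_mul_left' t (hmem s hs).1)
        _ ≤ t * star t := by
              rw [mul_assoc]
              apply IQ.mul_le_mul_left' t
              have := IQ.star_mono (hmem t ht).2.2.1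
              rwa [star_mul, hb'] at this
        _ ≤ b := (hmem t ht).2.1
    · rw [star_mul, star_star]
      calc s * star t * (t * star s) = s * (star t * t) * star s := by
            rw [mul_assoc, mul_assoc, mul_assoc]
        _ ≤ s * b * star s := IQ.mul_le_mul_right' _
              (IQ.mul_le_mul_left' s (hmem t ht).1)
        _ ≤ s * star s := by
              rw [mul_assoc]
              apply IQ.mul_le_mul_left' s
              have := IQ.star_mono (hmem s hs).2.2.1
              rwa [star_mul, hb'] at this
        _ ≤ b := (hmem s hs).2.1
    · calc s * star t * b = s * (star t * b) := mul_assoc _ _ _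
        _ ≤ s * star t := IQ.mul_le_mul_left' _ (hstb t ht)
  -- now the four conditions for sSup S
  refine ⟨?_, ?_, ?_, ?_⟩
  · -- star (sSup S) * sSup S ≤ b
    rw [InvQuantale.star_sSup]
    have himg : (⨆ s ∈ S, star s) = sSup (star '' S) := by rw [sSup_image]
    rw [himg, InvQuantale.sSup_mul]
    apply iSup₂_le
    rintro x ⟨s, hs, rfl⟩
    rw [InvQuantale.mul_sSup]
    exact iSup₂_le fun t ht => key1 s hs t ht
  · -- sSup S * star (sSup S) ≤ b
    rw [InvQuantale.star_sSup, InvQuantale.sSup_mul]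
    apply iSup₂_le
    intro s hs
    have himg : (⨆ t ∈ S, star t) = sSup (star '' S) := by rw [sSup_image]
    rw [himg, InvQuantale.mul_sSup]
    apply iSup₂_le
    rintro x ⟨t, ht, rfl⟩
    exact key2 s hs t ht
  · -- sSup S * b ≤ sSup S
    rw [InvQuantale.sSup_mul]
    exact iSup₂_le fun s hs => le_trans (hmem s hs).2.2.1 (le_sSup hs)
  · -- b * sSup S ≤ sSup S
    rw [InvQuantale.mul_sSup]
    exact iSup₂_le fun s hs => le_trans (hmem s hs).2.2.2 (le_sSup hs)
end
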